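/- arXiv:1705.05190 — 2 statements merged into one kernel-verified Lean document; each statement's English description precedes it below -/
import Mathlib

section
/- With cyl₁ and Vol as defined (cyl₁(ν) = 2·∑_{ι⊂ν} ∏_d C(ν_d,ι_d) · C(|ν|+4,|ι|+2) and Vol(ν) = 2π²·∏_d f(d)^{ν_d}), the ratio P₁(ν) := cyl₁(ν)/Vol(ν) is unchanged when zero entries are added to ν: if ν' is ν with ν₀ replaced by 0, then P₁(ν) = P₁(ν'). -/
open Real

def absPart (ν : ℕ →₀ ℕ) : ℕ := ν.sum fun d m => d * m

noncomputable def cyl1 (ν : ℕ →₀ ℕ) : ℕ :=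
  2 * ∑ ι ∈ Finset.Iic ν,
      (∏ d ∈ ν.support, Nat.choose (ν d) (ι d)) *
        Nat.choose (absPart ν + 4) (absPart ι + 2)

noncomputable def f (d : ℕ) : ℝ :=
  ((Nat.doubleFactorial d : ℝ) / (Nat.doubleFactorial (d + 1) : ℝ)) * π ^ d *
    (if Odd d then π else 2)

noncomputable def Vol (ν : ℕ →₀ ℕ) : ℝ :=
  2 * π ^ 2 * (ν.prod fun d m => f d ^ m)

noncomputable def P1 (ν : ℕ →₀ ℕ) : ℝ := (cyl1 ν : ℝ) / Vol ν

lemma absPart_erase (ι : ℕ →₀ ℕ) : absPart (ι.erase 0) = absPart ι := by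
  classical
  unfold absPart
  rw [Finsupp.sum, Finsupp.sum, Finsupp.support_erase]
  rw [Finset.sum_congr rfl fun d hd => by
    rw [Finsupp.erase_ne (Finset.ne_of_mem_erase hd)]]
  exact Finset.sum_erase _ (by simp)

lemma erase_zero_apply_zero (ι : ℕ →₀ ℕ) : (ι.erase 0) 0 = 0 := Finsupp.erase_same

theorem P1_erase_zero (ν : ℕ →₀ ℕ) : P1 ν = P1 (ν.erase 0) := by
  classical
  by_cases h0 : 0 ∈ ν.support
  · set ν' := ν.erase 0 with hν'
    set n := ν 0 with hn
    have hA : absPart ν' = absPart ν := absPart_erase ν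
    -- factor the sum
    have hsum : ∑ ι ∈ Finset.Iic ν,
        (∏ d ∈ ν.support, Nat.choose (ν d) (ι d)) *
          Nat.choose (absPart ν + 4) (absPart ι + 2)
        = ∑ p ∈ (Finset.range (n + 1)) ×ˢ (Finset.Iic ν'),
            Nat.choose n p.1 *
              ((∏ d ∈ ν'.support, Nat.choose (ν' d) (p.2 d)) *
                Nat.choose (absPart ν' + 4) (absPart p.2 + 2)) := by
      refine Finset.sum_nbij' (fun ι => (ι 0, ι.erase 0))
        (fun p => Finsupp.single 0 p.1 + p.2) ?_ ?_ ?_ ?_ ?_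
      · intro ι hι
        rw [Finset.mem_Iic] at hι
        rw [Finset.mem_product, Finset.mem_range, Finset.mem_Iic]
        constructor
        · exact Nat.lt_succ_of_le (hι 0)
        · intro d
          by_cases hd : d = 0
          · subst hd; simp [Finsupp.erase_same]
          · simpa [hν', Finsupp.erase_ne hd] using hι d
      · intro p hp
        rw [Finset.mem_product, Finset.mem_range, Finset.mem_Iic] at hp
        rw [Finset.mem_Iic]
        intro d
        by_cases hd : d = 0
        · subst hd
          have h2 : p.2 0 = 0 :=
            Nat.le_zero.mp ((hp.2 0).trans_eq (erase_zero_apply_zero ν))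
          simpa [h2] using Nat.lt_succ_iff.mp hp.1
        · have he : ((Finsupp.single 0 p.1 + p.2 : ℕ →₀ ℕ)) d = p.2 d := by
            simp [Finsupp.single_apply, (Ne.symm hd : (0 : ℕ) ≠ d)]
          rw [he]
          exact (hp.2 d).trans_eq (by rw [hν', Finsupp.erase_ne hd])
      · intro ι _
        exact Finsupp.single_add_erase 0 ι
      · intro p hp
        rw [Finset.mem_product, Finset.mem_Iic] at hp
        have h2 : p.2 0 = 0 :=
          Nat.le_zero.mp ((hp.2 0).trans_eq (erase_zero_apply_zero ν))
        have h2' : 0 ∉ p.2.support := by simp [Finsupp.mem_support_iff, h2]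
        ext
        · simp [h2]
        · simp [Finsupp.erase_add, Finsupp.erase_single,
            Finsupp.erase_of_notMem_support h2']
      · intro ι hι
        rw [Finset.mem_Iic] at hι
        have hprod : ∏ d ∈ ν.support, Nat.choose (ν d) (ι d)
            = Nat.choose n (ι 0) *
              ∏ d ∈ ν'.support, Nat.choose (ν' d) ((ι.erase 0) d) := by
          rw [← Finset.mul_prod_erase ν.support _ h0]
          congr 1
          rw [hν', Finsupp.support_erase]
          refine Finset.prod_congr rfl fun d hd => ?_
          have hd0 : d ≠ 0 := Finset.ne_of_mem_erase hd
          simp [Finsupp.erase_ne hd0]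
        rw [hprod, hA, absPart_erase ι, mul_assoc]
    have hcyl : (cyl1 ν : ℕ) = 2 ^ n * cyl1 ν' := by
      unfold cyl1
      rw [hsum]
      simp only [Finset.sum_product, ← Finset.mul_sum]
      rw [← Finset.sum_mul, Nat.sum_range_choose]
      ring
    have hvol : Vol ν = 2 ^ n * Vol ν' := by
      unfold Vol
      rw [← Finsupp.mul_prod_erase ν 0 (fun d m => f d ^ m) h0]
      have hf0 : f 0 = 2 := by simp [f, Nat.doubleFactorial]
      rw [hf0, ← hν', ← hn]
      ring
    have h2n : (2 : ℝ) ^ n ≠ 0 := by positivity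
    rw [P1, P1, hcyl, hvol]
    push_cast
    rw [mul_div_mul_left _ _ h2n]
  · rw [Finsupp.erase_of_notMem_support h0]
end

section
/- For all k ≥ 0, cyl₁ of the stratum with an added marked point doubles: with cyl₁(ν) = 2·∑_{ι⊂ν} ∏_d C(ν_d,ι_d)·C(|ν|+4,|ι|+2), one has cyl₁([0¹ 1^k]) = 2·cyl₁([1^k]), i.e., adding a single part equal to 0 to the partition multiplies cyl₁ by 2. -/
lemma absPart_pair (a b : ℕ) : absPart (Finsupp.single 0 a + Finsupp.single 1 b) = b := by
  unfold absPart
  rw [Finsupp.sum_add_index (by simp) (by intros; ring)]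
  simp [Finsupp.sum_single_index]

lemma absPart_single1 (b : ℕ) : absPart (Finsupp.single 1 b) = b := by
  unfold absPart
  simp [Finsupp.sum_single_index]

lemma pair_apply (a b i : ℕ) :
    ((Finsupp.single 0 a + Finsupp.single 1 b : ℕ →₀ ℕ)) i =
      if i = 0 then a else if i = 1 then b else 0 := by
  rcases eq_or_ne i 0 with rfl | h0
  · simp
  rcases eq_or_ne i 1 with rfl | h1
  · simp
  · simp [Finsupp.single_apply, Ne.symm h0, Ne.symm h1, h0, h1]

lemma eq_pair_of_le {k : ℕ} {ι : ℕ →₀ ℕ}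
    (h : ι ≤ Finsupp.single 0 1 + Finsupp.single 1 k) :
    ι = Finsupp.single 0 (ι 0) + Finsupp.single 1 (ι 1) := by
  ext i
  rw [pair_apply]
  rcases eq_or_ne i 0 with rfl | h0
  · simp
  rcases eq_or_ne i 1 with rfl | h1
  · simp
  have := Finsupp.le_def.mp h i
  rw [pair_apply, if_neg h0, if_neg h1] at this
  simpa [h0, h1] using Nat.le_zero.mp this

lemma prod_support_pair {k : ℕ} (a b : ℕ) (ha : a ≤ 1) (hb : b ≤ k) :
    (∏ d ∈ ((Finsupp.single 0 1 + Finsupp.single 1 k : ℕ →₀ ℕ)).support,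
        Nat.choose (((Finsupp.single 0 1 + Finsupp.single 1 k : ℕ →₀ ℕ)) d)
          (((Finsupp.single 0 a + Finsupp.single 1 b : ℕ →₀ ℕ)) d)) = Nat.choose k b := by
  have hsub : ((Finsupp.single 0 1 + Finsupp.single 1 k : ℕ →₀ ℕ)).support ⊆
      ({0, 1} : Finset ℕ) := by
    intro d hd
    simp only [Finsupp.mem_support_iff, pair_apply] at hd
    by_contra hmem
    simp only [Finset.mem_insert, Finset.mem_singleton, not_or] at hmem
    exact hd (by rw [if_neg hmem.1, if_neg hmem.2])
  rw [Finset.prod_subset hsub ?_]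
  · rw [Finset.prod_pair (by norm_num)]
    simp only [pair_apply, if_pos rfl]
    norm_num
    interval_cases a <;> simp
  · intro d _ hd
    simp only [Finsupp.notMem_support_iff] at hd
    have hzero : ((Finsupp.single 0 a + Finsupp.single 1 b : ℕ →₀ ℕ)) d = 0 := by
      rw [pair_apply] at hd ⊢
      rcases eq_or_ne d 0 with rfl | h0
      · simp at hd
      rcases eq_or_ne d 1 with rfl | h1
      · rw [if_neg (by norm_num), if_pos rfl] at hd ⊢
        omega
      · rw [if_neg h0, if_neg h1]
    rw [hd, hzero]
    simp

theorem cyl1_marked_point_doubles (k : ℕ) :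
    cyl1 (Finsupp.single 0 1 + Finsupp.single 1 k) = 2 * cyl1 (Finsupp.single 1 k) := by
  unfold cyl1
  have hL : (∑ ι ∈ Finset.Iic (Finsupp.single 0 1 + Finsupp.single 1 k),
      (∏ d ∈ ((Finsupp.single 0 1 + Finsupp.single 1 k : ℕ →₀ ℕ)).support,
        Nat.choose (((Finsupp.single 0 1 + Finsupp.single 1 k : ℕ →₀ ℕ)) d) (ι d)) *
        Nat.choose (absPart (Finsupp.single 0 1 + Finsupp.single 1 k) + 4) (absPart ι + 2))
      = ∑ p ∈ (Finset.Iic 1) ×ˢ (Finset.Iic k),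
          Nat.choose k p.2 * Nat.choose (k + 4) (p.2 + 2) := by
    refine Finset.sum_nbij' (fun ι => (ι 0, ι 1))
      (fun p => Finsupp.single 0 p.1 + Finsupp.single 1 p.2) ?_ ?_ ?_ ?_ ?_
    · intro ι hι
      rw [Finset.mem_Iic] at hι
      have h0 := Finsupp.le_def.mp hι 0
      have h1 := Finsupp.le_def.mp hι 1
      rw [pair_apply] at h0 h1
      simp only [Finset.mem_product, Finset.mem_Iic]
      exact ⟨by simpa using h0, by simpa using h1⟩
    · intro p hp
      simp only [Finset.mem_product, Finset.mem_Iic] at hp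
      rw [Finset.mem_Iic, Finsupp.le_def]
      intro i
      rw [pair_apply, pair_apply]
      split_ifs <;> simp [hp.1, hp.2]
    · intro ι hι
      rw [Finset.mem_Iic] at hι
      exact (eq_pair_of_le hι).symm
    · intro p _
      simp [pair_apply]
    · intro ι hι
      rw [Finset.mem_Iic] at hι
      have h0 := Finsupp.le_def.mp hι 0
      have h1 := Finsupp.le_def.mp hι 1
      rw [pair_apply] at h0 h1
      simp only [if_pos rfl] at h0
      norm_num at h1
      rw [eq_pair_of_le hι, prod_support_pair _ _ h0 h1, absPart_pair]
      rw [absPart_pair]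
      simp [pair_apply]
  have hR : (∑ ι ∈ Finset.Iic (Finsupp.single 1 k),
      (∏ d ∈ (Finsupp.single 1 k : ℕ →₀ ℕ).support,
        Nat.choose ((Finsupp.single 1 k : ℕ →₀ ℕ) d) (ι d)) *
        Nat.choose (absPart (Finsupp.single 1 k) + 4) (absPart ι + 2))
      = ∑ b ∈ Finset.Iic k, Nat.choose k b * Nat.choose (k + 4) (b + 2) := by
    refine Finset.sum_nbij' (fun ι => ι 1) (fun b => Finsupp.single 1 b) ?_ ?_ ?_ ?_ ?_
    · intro ι hι
      rw [Finset.mem_Iic] at hι ⊢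
      simpa using Finsupp.le_def.mp hι 1
    · intro b hb
      rw [Finset.mem_Iic] at hb ⊢
      rw [Finsupp.le_def]
      intro i
      rcases eq_or_ne i 1 with rfl | h1
      · simpa using hb
      · simp [Finsupp.single_apply, Ne.symm h1]
    · intro ι hι
      rw [Finset.mem_Iic] at hι
      have : ι = Finsupp.single 1 (ι 1) := by
        ext i
        rcases eq_or_ne i 1 with rfl | h1
        · simp
        · have := Finsupp.le_def.mp hι i
          rw [Finsupp.single_apply, if_neg (Ne.symm h1)] at this
          simpa [Finsupp.single_apply, Ne.symm h1] using Nat.le_zero.mp this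
      exact this.symm
    · intro b _; simp
    · intro ι hι
      rw [Finset.mem_Iic] at hι
      have hι1 : ι = Finsupp.single 1 (ι 1) := by
        ext i
        rcases eq_or_ne i 1 with rfl | h1
        · simp
        · have := Finsupp.le_def.mp hι i
          rw [Finsupp.single_apply, if_neg (Ne.symm h1)] at this
          simpa [Finsupp.single_apply, Ne.symm h1] using Nat.le_zero.mp this
      rw [absPart_single1]
      conv_lhs => rw [hι1]
      rw [absPart_single1]
      congr 1
      rcases eq_or_ne k 0 with rfl | hk
      · have h1 := Finsupp.le_def.mp hι 1
        simp only [Finsupp.single_apply, if_pos rfl] at h1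
        simp [Nat.le_zero.mp h1]
      · rw [Finsupp.support_single_ne_zero _ hk, Finset.prod_singleton]
        simp
  rw [hL, hR, Finset.sum_product]
  have h01 : (Finset.Iic 1 : Finset ℕ) = {0, 1} := rfl
  rw [h01, Finset.sum_insert (by norm_num), Finset.sum_singleton]
  ring
end
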